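/- If G is a finite tree and e is an edge fixed (with orientation) by every automorphism of G, and G₁, G₂ are the two components of G with e removed, then Aut(G) is isomorphic to Aut(G₁) × Aut(G₂), where Aut(Gᵢ) denotes automorphisms of Gᵢ fixing the endpoint of e in Gᵢ. -/

import Mathlib

open SimpleGraph

/-- The connected component (as a vertex set) containing `u` after deleting the edge
`{u, v}` from `G`. -/
def sideOf {V : Type*} (G : SimpleGraph V) (u v : V) : Set V :=
  {x | (G.deleteEdges {s(u, v)}).Reachable u x}

theorem mem_sideOf {V : Type*} (G : SimpleGraph V) (u v : V) : u ∈ sideOf G u v :=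
  Reachable.refl u

/-- The subgroup of automorphisms of a graph fixing a given vertex. -/
def vertexStabilizer {W : Type*} (G : SimpleGraph W) (x : W) : Subgroup (G ≃g G) where
  carrier := {φ | φ x = x}
  one_mem' := rfl
  mul_mem' := by
    intro a b ha hb
    simp only [Set.mem_setOf_eq] at *
    show a (b x) = x
    rw [hb, ha]
  inv_mem' := by
    intro a ha
    simp only [Set.mem_setOf_eq] at *
    show a.symm x = x
    conv_lhs => rw [← ha]
    exact a.symm_apply_apply x

section Helpers
variable {V : Type*} {G : SimpleGraph V} {u v : V}

lemma del_swap (G : SimpleGraph V) (u v : V) :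
    G.deleteEdges {s(v, u)} = G.deleteEdges {s(u, v)} := by rw [Sym2.eq_swap]

lemma side_disjoint (hG : G.IsTree) (huv : G.Adj u v) {x : V}
    (h1 : x ∈ sideOf G u v) (h2 : x ∈ sideOf G v u) : False := by
  have hb : ¬(G.deleteEdges {s(u, v)}).Reachable u v :=
    isBridge_iff.mp (isAcyclic_iff_forall_adj_isBridge.mp hG.2 huv)
  simp only [sideOf, Set.mem_setOf_eq] at h1 h2
  rw [del_swap G u v] at h2
  exact hb (h1.trans h2.symm)

lemma side_step {a c : V} (ha : a ∈ sideOf G u v) (hac : G.Adj a c) :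
    c ∈ sideOf G u v ∨ c ∈ sideOf G v u := by
  by_cases h : s(a, c) = s(u, v)
  · rw [Sym2.eq_iff] at h
    rcases h with ⟨ha1, hc⟩ | ⟨ha1, hc⟩
    · rw [hc]; exact Or.inr (Reachable.refl v)
    · rw [hc]; exact Or.inl (mem_sideOf G u v)
  · exact Or.inl (ha.trans (Adj.reachable (by simp [hac, h])))

lemma side_cover (hG : G.IsTree) (x : V) : x ∈ sideOf G u v ∨ x ∈ sideOf G v u := by
  obtain ⟨w⟩ := hG.isConnected.preconnected u x
  have key : ∀ {a b : V}, G.Walk a b → a ∈ sideOf G u v ∨ a ∈ sideOf G v u →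
      b ∈ sideOf G u v ∨ b ∈ sideOf G v u := by
    intro a b w
    induction w with
    | nil => exact id
    | cons hac p ih =>
      intro ha
      refine ih ?_
      rcases ha with ha | ha
      · exact side_step ha hac
      · exact (side_step (u := v) (v := u) ha hac).symm
  exact key w (Or.inl (mem_sideOf G u v))

lemma cross_adj (hG : G.IsTree) (huv : G.Adj u v) {a b : V}
    (ha : a ∈ sideOf G u v) (hb : b ∈ sideOf G v u) (hab : G.Adj a b) :
    a = u ∧ b = v := by
  by_cases h : s(a, b) = s(u, v)
  · rw [Sym2.eq_iff] at h
    rcases h with ⟨ha1, hb1⟩ | ⟨ha1, hb1⟩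
    · exact ⟨ha1, hb1⟩
    · rw [ha1] at ha
      exact absurd (Reachable.refl v) (fun h2 => side_disjoint hG huv ha h2)
  · have : b ∈ sideOf G u v := ha.trans (Adj.reachable (by simp [hab, h]))
    exact absurd this (fun h' => side_disjoint hG huv h' hb)

/-- An automorphism fixing `u` and `v` induces an automorphism of the edge-deleted graph. -/
def delIso (φ : G ≃g G) (h1 : φ u = u) (h2 : φ v = v) :
    G.deleteEdges {s(u, v)} ≃g G.deleteEdges {s(u, v)} where
  toEquiv := φ.toEquiv
  map_rel_iff' := by
    intro a b
    have key : (s(φ a, φ b) : Sym2 V) = s(u, v) ↔ s(a, b) = s(u, v) := by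
      conv_lhs => rw [← h1, ← h2]
      rw [Sym2.eq_iff, Sym2.eq_iff]
      simp [φ.toEquiv.injective.eq_iff]
    simp only [RelIso.coe_fn_toEquiv, deleteEdges_adj, Set.mem_singleton_iff, φ.map_adj_iff, key]

lemma map_side (φ : G ≃g G) (h1 : φ u = u) (h2 : φ v = v) {x : V}
    (hx : x ∈ sideOf G u v) : φ x ∈ sideOf G u v := by
  have := hx.map (delIso φ h1 h2).toHom
  simpa [delIso, h1, sideOf] using this

lemma symm_fix (φ : G ≃g G) {x : V} (h : φ x = x) : φ.symm x = x := by
  conv_lhs => rw [← h]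
  exact φ.toEquiv.symm_apply_apply x

/-- Restriction of an automorphism to the `u`-side. -/
def restrictSide (φ : G ≃g G) (h1 : φ u = u) (h2 : φ v = v) :
    G.induce (sideOf G u v) ≃g G.induce (sideOf G u v) where
  toFun := fun x => ⟨φ x, map_side φ h1 h2 x.2⟩
  invFun := fun x => ⟨φ.symm x, map_side φ.symm (symm_fix φ h1) (symm_fix φ h2) x.2⟩
  left_inv := fun x => by ext; exact φ.toEquiv.symm_apply_apply x
  right_inv := fun x => by ext; exact φ.toEquiv.apply_symm_apply x
  map_rel_iff' := by intro a b; exact φ.map_adj_iff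

end Helpers


section Glue
variable {V : Type*} {G : SimpleGraph V} {u v : V}

open Classical in
/-- Glue two side automorphisms into a function on `V`. -/
noncomputable def glueFun (hG : G.IsTree)
    (φ₁ : G.induce (sideOf G u v) ≃g G.induce (sideOf G u v))
    (φ₂ : G.induce (sideOf G v u) ≃g G.induce (sideOf G v u)) (x : V) : V :=
  if h : x ∈ sideOf G u v then (φ₁ ⟨x, h⟩ : V)
  else (φ₂ ⟨x, (side_cover hG x).resolve_left h⟩ : V)

lemma glue_mem₁ (hG : G.IsTree)
    (φ₁ : G.induce (sideOf G u v) ≃g G.induce (sideOf G u v))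
    (φ₂ : G.induce (sideOf G v u) ≃g G.induce (sideOf G v u)) {x : V}
    (h : x ∈ sideOf G u v) : glueFun hG φ₁ φ₂ x = (φ₁ ⟨x, h⟩ : V) := dif_pos h

lemma glue_mem₂ (hG : G.IsTree) (huv : G.Adj u v)
    (φ₁ : G.induce (sideOf G u v) ≃g G.induce (sideOf G u v))
    (φ₂ : G.induce (sideOf G v u) ≃g G.induce (sideOf G v u)) {x : V}
    (h : x ∈ sideOf G v u) : glueFun hG φ₁ φ₂ x = (φ₂ ⟨x, h⟩ : V) := by
  have hn : x ∉ sideOf G u v := fun h' => side_disjoint hG huv h' h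
  rw [glueFun, dif_neg hn]

lemma glue_left_inv (hG : G.IsTree) (huv : G.Adj u v)
    (φ₁ : G.induce (sideOf G u v) ≃g G.induce (sideOf G u v))
    (φ₂ : G.induce (sideOf G v u) ≃g G.induce (sideOf G v u)) (x : V) :
    glueFun hG φ₁.symm φ₂.symm (glueFun hG φ₁ φ₂ x) = x := by
  rcases side_cover (u := u) (v := v) hG x with h | h
  · rw [glue_mem₁ hG φ₁ φ₂ h, glue_mem₁ hG φ₁.symm φ₂.symm (φ₁ ⟨x, h⟩).2]
    exact congrArg Subtype.val (φ₁.symm_apply_apply ⟨x, h⟩)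
  · rw [glue_mem₂ hG huv φ₁ φ₂ h, glue_mem₂ hG huv φ₁.symm φ₂.symm (φ₂ ⟨x, h⟩).2]
    exact congrArg Subtype.val (φ₂.symm_apply_apply ⟨x, h⟩)

lemma glue_adj (hG : G.IsTree) (huv : G.Adj u v)
    (φ₁ : G.induce (sideOf G u v) ≃g G.induce (sideOf G u v))
    (φ₂ : G.induce (sideOf G v u) ≃g G.induce (sideOf G v u))
    (h₁ : (φ₁ ⟨u, mem_sideOf G u v⟩ : V) = u) (h₂ : (φ₂ ⟨v, mem_sideOf G v u⟩ : V) = v)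
    {a b : V} (hab : G.Adj a b) :
    G.Adj (glueFun hG φ₁ φ₂ a) (glueFun hG φ₁ φ₂ b) := by
  rcases side_cover (u := u) (v := v) hG a with ha | ha <;>
    rcases side_cover (u := u) (v := v) hG b with hb | hb
  · rw [glue_mem₁ hG φ₁ φ₂ ha, glue_mem₁ hG φ₁ φ₂ hb]
    exact φ₁.map_adj_iff.mpr hab
  · obtain ⟨ha1, hb1⟩ := cross_adj hG huv ha hb hab
    rw [glue_mem₁ hG φ₁ φ₂ ha, glue_mem₂ hG huv φ₁ φ₂ hb]
    have e1 : (φ₁ ⟨a, ha⟩ : V) = u := by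
      rw [show (⟨a, ha⟩ : sideOf G u v) = ⟨u, mem_sideOf G u v⟩ from Subtype.ext ha1, h₁]
    have e2 : (φ₂ ⟨b, hb⟩ : V) = v := by
      rw [show (⟨b, hb⟩ : sideOf G v u) = ⟨v, mem_sideOf G v u⟩ from Subtype.ext hb1, h₂]
    rw [e1, e2]; exact huv
  · obtain ⟨hb1, ha1⟩ := cross_adj hG huv hb ha hab.symm
    rw [glue_mem₂ hG huv φ₁ φ₂ ha, glue_mem₁ hG φ₁ φ₂ hb]
    have e1 : (φ₂ ⟨a, ha⟩ : V) = v := by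
      rw [show (⟨a, ha⟩ : sideOf G v u) = ⟨v, mem_sideOf G v u⟩ from Subtype.ext ha1, h₂]
    have e2 : (φ₁ ⟨b, hb⟩ : V) = u := by
      rw [show (⟨b, hb⟩ : sideOf G u v) = ⟨u, mem_sideOf G u v⟩ from Subtype.ext hb1, h₁]
    rw [e1, e2]; exact huv.symm
  · rw [glue_mem₂ hG huv φ₁ φ₂ ha, glue_mem₂ hG huv φ₁ φ₂ hb]
    exact φ₂.map_adj_iff.mpr hab

/-- Glue two side automorphisms (fixing `u` resp. `v`) into an automorphism of `G`. -/
noncomputable def glueIso (hG : G.IsTree) (huv : G.Adj u v)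
    (φ₁ : G.induce (sideOf G u v) ≃g G.induce (sideOf G u v))
    (φ₂ : G.induce (sideOf G v u) ≃g G.induce (sideOf G v u))
    (h₁ : (φ₁ ⟨u, mem_sideOf G u v⟩ : V) = u) (h₂ : (φ₂ ⟨v, mem_sideOf G v u⟩ : V) = v) :
    G ≃g G where
  toFun := glueFun hG φ₁ φ₂
  invFun := glueFun hG φ₁.symm φ₂.symm
  left_inv := glue_left_inv hG huv φ₁ φ₂
  right_inv := fun x => by
    have := glue_left_inv hG huv φ₁.symm φ₂.symm x
    simpa using this
  map_rel_iff' := by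
    intro a b
    have h₁s : (φ₁.symm ⟨u, mem_sideOf G u v⟩ : V) = u :=
      congrArg Subtype.val (symm_fix φ₁ (Subtype.ext h₁))
    have h₂s : (φ₂.symm ⟨v, mem_sideOf G v u⟩ : V) = v :=
      congrArg Subtype.val (symm_fix φ₂ (Subtype.ext h₂))
    constructor
    · intro h
      change G.Adj (glueFun hG φ₁ φ₂ a) (glueFun hG φ₁ φ₂ b) at h
      have := glue_adj hG huv φ₁.symm φ₂.symm h₁s h₂s h
      rwa [glue_left_inv hG huv φ₁ φ₂, glue_left_inv hG huv φ₁ φ₂] at this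
    · exact glue_adj hG huv φ₁ φ₂ h₁ h₂

end Glue

/-- Product Decomposition: if `G` is a finite tree and `e = {u,v}` is an edge fixed
pointwise by every automorphism, and `G₁ ∋ u`, `G₂ ∋ v` are the two components of
`G` with `e` removed, then `Aut(G) ≅ Aut(G₁, u) × Aut(G₂, v)`, where `Aut(Gᵢ, x)` is
the group of automorphisms of the induced graph `Gᵢ` fixing `x`. -/
theorem product_decomposition {V : Type*} [Fintype V] (G : SimpleGraph V)
    (hG : G.IsTree) (u v : V) (huv : G.Adj u v)
    (hu : ∀ φ : G ≃g G, φ u = u) (hv : ∀ φ : G ≃g G, φ v = v) :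
    Nonempty ((G ≃g G) ≃*
      (vertexStabilizer (G.induce (sideOf G u v)) ⟨u, mem_sideOf G u v⟩ ×
       vertexStabilizer (G.induce (sideOf G v u)) ⟨v, mem_sideOf G v u⟩)) := by
  classical
  let F : (G ≃g G) →*
      (vertexStabilizer (G.induce (sideOf G u v)) ⟨u, mem_sideOf G u v⟩ ×
       vertexStabilizer (G.induce (sideOf G v u)) ⟨v, mem_sideOf G v u⟩) :=
    { toFun := fun φ =>
        (⟨restrictSide φ (hu φ) (hv φ), Subtype.ext (hu φ)⟩,
         ⟨restrictSide (u := v) (v := u) φ (hv φ) (hu φ), Subtype.ext (hv φ)⟩)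
      map_one' := rfl
      map_mul' := fun φ ψ => rfl }
  refine ⟨MulEquiv.ofBijective F ⟨?_, ?_⟩⟩
  · intro φ ψ h
    have key : ∀ x : V, φ x = ψ x := by
      intro x
      rcases side_cover (u := u) (v := v) hG x with hx | hx
      · exact congrArg (fun p => ((p.1 : _).1 ⟨x, hx⟩ : V)) h
      · exact congrArg (fun p => ((p.2 : _).1 ⟨x, hx⟩ : V)) h
    exact RelIso.ext key
  · rintro ⟨⟨φ₁, h₁⟩, ⟨φ₂, h₂⟩⟩
    have h₁e : φ₁ ⟨u, mem_sideOf G u v⟩ = ⟨u, mem_sideOf G u v⟩ := h₁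
    have h₂e : φ₂ ⟨v, mem_sideOf G v u⟩ = ⟨v, mem_sideOf G v u⟩ := h₂
    refine ⟨glueIso hG huv φ₁ φ₂ (congrArg Subtype.val h₁e) (congrArg Subtype.val h₂e), ?_⟩
    refine Prod.ext (Subtype.ext (RelIso.ext fun x => ?_)) (Subtype.ext (RelIso.ext fun x => ?_))
    · exact Subtype.ext (glue_mem₁ hG φ₁ φ₂ x.2)
    · exact Subtype.ext (glue_mem₂ hG huv φ₁ φ₂ x.2)
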